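/- Let x ∈ ℝ, δ > 0, L > 0, and let h : ℝ → ℝ be continuous with |h(x₁) − h(x₂)| ≤ L|x₁ − x₂| for all x₁, x₂ ∈ [x − δ, x + δ]. Define a₀,δ(x) := 2∫₀¹ h(x + δ sin(2πs)) ds and ε₂(x, t) := ∫₀^t [h(x + δ sin(2πτ)) − a₀,δ(x)/2] dτ for t ≥ 0. Then |ε₂(x, t)| ≤ 2Lδ for all t ≥ 0. (Bound on the zeroth-order averaging error used in the proof of Theorem 1 for the high-pass-filter channel.) -/
import Mathlib


open MeasureTheory Real

noncomputable def a0 (h : ℝ → ℝ) (δ x : ℝ) : ℝ :=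
  2 * ∫ s in (0:ℝ)..1, h (x + δ * Real.sin (2 * Real.pi * s))

/-- Bound on the zeroth-order averaging error used in the proof of Theorem 1 for the
high-pass-filter channel. -/
theorem stmt17
    (x δ L : ℝ) (hδ : 0 < δ) (hL : 0 < L)
    (h : ℝ → ℝ) (hc : Continuous h)
    (hLip : ∀ x₁ ∈ Set.Icc (x - δ) (x + δ), ∀ x₂ ∈ Set.Icc (x - δ) (x + δ),
      |h x₁ - h x₂| ≤ L * |x₁ - x₂|)
    (eps2 : ℝ → ℝ)
    (heps2 : ∀ t : ℝ, eps2 t =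
      ∫ τ in (0:ℝ)..t, (h (x + δ * Real.sin (2 * Real.pi * τ)) - a0 h δ x / 2)) :
    ∀ t : ℝ, 0 ≤ t → |eps2 t| ≤ 2 * L * δ := by
  intro t ht
  have hinner : Continuous fun τ : ℝ => x + δ * Real.sin (2 * Real.pi * τ) :=
    continuous_const.add (continuous_const.mul
      (Real.continuous_sin.comp (continuous_const.mul continuous_id)))
  set g : ℝ → ℝ := fun τ => h (x + δ * Real.sin (2 * Real.pi * τ)) - a0 h δ x / 2 with hg
  have hgc : Continuous g := by
    apply Continuous.sub
    · exact hc.comp hinner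
    · exact continuous_const
  have hint : ∀ t₁ t₂ : ℝ, IntervalIntegrable g MeasureSpace.volume t₁ t₂ :=
    fun t₁ t₂ => hgc.intervalIntegrable t₁ t₂
  -- g is periodic with period 1
  have hper : Function.Periodic g 1 := by
    intro τ
    simp only [hg]
    have : 2 * Real.pi * (τ + 1) = 2 * Real.pi * τ + 2 * Real.pi := by ring
    rw [this, Real.sin_add_two_pi]
  -- integral of g over one period is zero
  have hzero : (∫ τ in (0:ℝ)..1, g τ) = 0 := by
    have hci : Continuous fun τ : ℝ => h (x + δ * Real.sin (2 * Real.pi * τ)) :=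
      hc.comp hinner
    simp only [hg]
    rw [intervalIntegral.integral_sub (hci.intervalIntegrable 0 1)
      (intervalIntegrable_const), intervalIntegral.integral_const]
    simp [a0]
  -- in-range membership
  have hmem : ∀ τ : ℝ, x + δ * Real.sin (2 * Real.pi * τ) ∈ Set.Icc (x - δ) (x + δ) := by
    intro τ
    constructor
    · nlinarith [Real.neg_one_le_sin (2 * Real.pi * τ)]
    · nlinarith [Real.sin_le_one (2 * Real.pi * τ)]
  -- pointwise bound |g τ| ≤ 2 L δ
  have hbound : ∀ τ : ℝ, |g τ| ≤ 2 * L * δ := by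
    intro τ
    set y := x + δ * Real.sin (2 * Real.pi * τ) with hy
    have hy' : y ∈ Set.Icc (x - δ) (x + δ) := hmem τ
    have hrepr : g τ = ∫ s in (0:ℝ)..1, (h y - h (x + δ * Real.sin (2 * Real.pi * s))) := by
      have hci : Continuous fun s : ℝ => h (x + δ * Real.sin (2 * Real.pi * s)) :=
        hc.comp hinner
      rw [intervalIntegral.integral_sub intervalIntegrable_const
        (hci.intervalIntegrable 0 1), intervalIntegral.integral_const]
      simp only [hg, a0, sub_zero, smul_eq_mul, one_mul]
      ring
    rw [hrepr]
    have key : ‖∫ s in (0:ℝ)..1, (h y - h (x + δ * Real.sin (2 * Real.pi * s)))‖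
        ≤ 2 * L * δ * |(1:ℝ) - 0| := by
      apply intervalIntegral.norm_integral_le_of_norm_le_const
      intro s _
      have hz := hmem s
      have := hLip y hy' _ hz
      have habs : |y - (x + δ * Real.sin (2 * Real.pi * s))| ≤ 2 * δ := by
        rw [abs_le]
        constructor <;> [nlinarith [hy'.1, hy'.2, hz.1, hz.2]; nlinarith [hy'.1, hy'.2, hz.1, hz.2]]
      calc ‖h y - h (x + δ * Real.sin (2 * Real.pi * s))‖
          ≤ L * |y - (x + δ * Real.sin (2 * Real.pi * s))| := this
        _ ≤ L * (2 * δ) := by nlinarith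
        _ = 2 * L * δ := by ring
    simpa using key
  -- reduce to fractional part
  have ht1 : t = Int.fract (t / 1) * 1 + ⌊t / 1⌋ • (1:ℝ) :=
    (Int.fract_div_mul_self_add_zsmul_eq 1 t one_ne_zero).symm
  set ε := Int.fract (t / 1) * 1 with hε
  have hsplit : (∫ τ in (0:ℝ)..t, g τ) = ∫ τ in (0:ℝ)..ε, g τ := by
    conv_lhs => rw [ht1]
    rw [← intervalIntegral.integral_add_adjacent_intervals (hint 0 ε) (hint ε (ε + ⌊t / 1⌋ • (1:ℝ)))]
    rw [hper.intervalIntegral_add_zsmul_eq ⌊t / 1⌋ ε hint,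
      hper.intervalIntegral_add_eq ε 0, zero_add, hzero]
    simp
  rw [heps2 t, hsplit]
  have hεnn : 0 ≤ ε := by
    have := Int.fract_nonneg (t / 1); rw [hε]; nlinarith
  have hεlt : ε ≤ 1 := by
    have := (Int.fract_lt_one (t / 1)).le; rw [hε]; nlinarith
  have key : ‖∫ τ in (0:ℝ)..ε, g τ‖ ≤ 2 * L * δ * |ε - 0| := by
    apply intervalIntegral.norm_integral_le_of_norm_le_const
    intro s _
    exact hbound s
  have : |∫ τ in (0:ℝ)..ε, g τ| ≤ 2 * L * δ * ε := by
    simpa [abs_of_nonneg hεnn] using key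
  have h2 : 0 ≤ 2 * L * δ := by positivity
  linarith [mul_le_of_le_one_right h2 hεlt]
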